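/- Let ℓ ≥ 1, r > 0, and let q : ℝ^ℓ → ℝ be real analytic on the open ball B(0,r) ⊂ ℝ^ℓ. Suppose that for every w ∈ ℝ^ℓ there exist δ_w > 0 and a map φ : (−δ_w, δ_w) → B(0,r) with φ(0) = 0, φ differentiable at 0 with φ′(0) = w, and Dq(φ(s)) = 0 for every s ∈ (−δ_w, δ_w). Then q is constant on some open ball centered at 0. -/

import Mathlib

/-- If `q` is analytic on `B(0,r)` and every direction `w` is generated by a one-parameter
family of critical points of `q` through `0`, then `q` is constant on a ball around `0`. -/
theorem stmt_2 (ℓ : ℕ) (hℓ : 1 ≤ ℓ) (r : ℝ) (hr : 0 < r)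
    (q : EuclideanSpace ℝ (Fin ℓ) → ℝ)
    (hq : AnalyticOnNhd ℝ q (Metric.ball 0 r))
    (hint : ∀ w : EuclideanSpace ℝ (Fin ℓ), ∃ δ > (0 : ℝ),
      ∃ φ : ℝ → EuclideanSpace ℝ (Fin ℓ),
        (∀ s : ℝ, |s| < δ → φ s ∈ Metric.ball (0 : EuclideanSpace ℝ (Fin ℓ)) r) ∧
        φ 0 = 0 ∧ HasDerivAt φ w 0 ∧
        (∀ s : ℝ, |s| < δ → fderiv ℝ q (φ s) = 0)) :
    ∃ ρ > (0 : ℝ), ∀ x ∈ Metric.ball (0 : EuclideanSpace ℝ (Fin ℓ)) ρ, q x = q 0 := by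
  have h0 : (0 : EuclideanSpace ℝ (Fin ℓ)) ∈ Metric.ball (0 : EuclideanSpace ℝ (Fin ℓ)) r := by
    simpa using hr
  have hg : AnalyticOnNhd ℝ (fderiv ℝ q) (Metric.ball (0 : EuclideanSpace ℝ (Fin ℓ)) r) :=
    hq.fderiv
  obtain ⟨p, hp⟩ := hg 0 h0
  -- every coefficient of p vanishes on the diagonal
  have key : ∀ n : ℕ, ∀ w : EuclideanSpace ℝ (Fin ℓ), p n (fun _ => w) = 0 := by
    intro n
    induction n using Nat.strong_induction_on with
    | _ n ih =>
      intro w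
      obtain ⟨δ, hδ, φ, hφball, hφ0, hφd, hφcrit⟩ := hint w
      have hO := hp.isBigO_sub_partialSum_pow (n + 1)
      obtain ⟨C, hC⟩ := hO.bound
      -- φ is continuous at 0 and tends to 0
      have hφc : Filter.Tendsto φ (nhds 0) (nhds 0) := by
        simpa [hφ0] using hφd.continuousAt.tendsto
      -- slope tends to w
      have hslope : Filter.Tendsto (fun s : ℝ => s⁻¹ • φ s) (nhdsWithin 0 {0}ᶜ) (nhds w) := by
        have h1 := hasDerivAt_iff_tendsto_slope.1 hφd
        have h2 : slope φ 0 = fun s : ℝ => s⁻¹ • φ s := by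
          funext s
          rw [slope_def_module, hφ0, sub_zero, sub_zero]
        rwa [h2] at h1
      -- eventual bound on ‖p n ((φ s)^n)‖
      have hev : ∀ᶠ s in nhdsWithin (0:ℝ) {0}ᶜ,
          ‖p n (fun _ => φ s)‖ ≤ C * ‖φ s‖ ^ (n + 1) := by
        have h1 : ∀ᶠ s in nhds (0:ℝ),
            ‖fderiv ℝ q ((0 : EuclideanSpace ℝ (Fin ℓ)) + φ s)
              - p.partialSum (n + 1) (φ s)‖ ≤ C * ‖‖φ s‖ ^ (n + 1)‖ := hφc.eventually hC
        have h2 : ∀ᶠ s in nhds (0:ℝ), |s| < δ := by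
          have habs : Filter.Tendsto (fun s : ℝ => |s|) (nhds 0) (nhds 0) := by
            simpa using continuous_abs.tendsto (0:ℝ)
          exact habs.eventually_lt_const hδ
        filter_upwards [nhdsWithin_le_nhds h1, nhdsWithin_le_nhds h2] with s hs1 hs2
        have hcrit : fderiv ℝ q (φ s) = 0 := hφcrit s hs2
        have hps : p.partialSum (n + 1) (φ s) = p n (fun _ => φ s) := by
          rw [FormalMultilinearSeries.partialSum]
          rw [Finset.sum_eq_single n]
          · intro k hk hkn
            have : k < n := by
              have := Finset.mem_range.1 hk; omega
            exact ih k this _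
          · intro h
            exact absurd (Finset.mem_range.2 (Nat.lt_succ_self n)) h
        rw [hps] at hs1
        have h3 : ‖(0 : EuclideanSpace ℝ (Fin ℓ) →L[ℝ] ℝ) - p n (fun _ => φ s)‖
            ≤ C * ‖‖φ s‖ ^ (n+1)‖ := by
          rw [← hcrit]; simpa using hs1
        simpa [norm_pow, abs_of_nonneg (norm_nonneg (φ _))] using h3
      -- the scaled quantity
      have hA : Filter.Tendsto (fun s : ℝ => p n (fun _ => s⁻¹ • φ s))
          (nhdsWithin 0 {0}ᶜ) (nhds (p n (fun _ => w))) := by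
        have hcont : Continuous (fun y : EuclideanSpace ℝ (Fin ℓ) => p n (fun _ => y)) :=
          (p n).cont.comp (continuous_pi fun _ => continuous_id)
        exact (hcont.tendsto w).comp hslope
      have hB : Filter.Tendsto (fun s : ℝ => p n (fun _ => s⁻¹ • φ s))
          (nhdsWithin 0 {0}ᶜ) (nhds 0) := by
        apply squeeze_zero_norm' (a := fun s => C * (‖s⁻¹ • φ s‖ ^ n * ‖φ s‖))
        · filter_upwards [hev, self_mem_nhdsWithin] with s hs hs0
          have hsm : (p n) (fun _ => s⁻¹ • φ s) = (s⁻¹) ^ n • (p n) (fun _ => φ s) := by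
            simpa using (p n).map_smul_univ (fun _ => s⁻¹) (fun _ => φ s)
          rw [hsm, norm_smul, norm_pow, Real.norm_eq_abs]
          have hnorm : ‖s⁻¹ • φ s‖ ^ n = |s⁻¹| ^ n * ‖φ s‖ ^ n := by
            rw [norm_smul, mul_pow, Real.norm_eq_abs]
          calc |s⁻¹| ^ n * ‖(p n) fun _ => φ s‖
              ≤ |s⁻¹| ^ n * (C * ‖φ s‖ ^ (n + 1)) :=
                mul_le_mul_of_nonneg_left hs (by positivity)
            _ = C * (‖s⁻¹ • φ s‖ ^ n * ‖φ s‖) := by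
                rw [hnorm, pow_succ]; ring
        · have h1 : Filter.Tendsto (fun s : ℝ => ‖s⁻¹ • φ s‖ ^ n)
              (nhdsWithin 0 {0}ᶜ) (nhds (‖w‖ ^ n)) :=
            ((continuous_norm.tendsto w).comp hslope).pow n
          have h2 : Filter.Tendsto (fun s : ℝ => ‖φ s‖)
              (nhdsWithin (0:ℝ) {(0:ℝ)}ᶜ) (nhds 0) := by
            have h3 : Filter.Tendsto (fun s : ℝ => ‖φ s‖) (nhds 0) (nhds 0) := by
              simpa using hφc.norm
            exact h3.mono_left nhdsWithin_le_nhds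
          have := (h1.mul h2).const_mul C
          simpa using this
      exact tendsto_nhds_unique hA hB
  -- hence fderiv q = 0 on the convergence ball
  obtain ⟨rp, hrp⟩ := hp
  have hzero : ∀ y ∈ Metric.eball (0 : EuclideanSpace ℝ (Fin ℓ)) rp, fderiv ℝ q y = 0 := by
    intro y hy
    have hsum := hrp.hasSum (by simpa using hy)
    have h0' : HasSum (fun n => p n (fun _ => y)) 0 := by
      simp only [key]; exact hasSum_zero
    have := hsum.unique h0'
    simpa using this
  -- choose a real radius
  obtain ⟨ε, hε0, hεr, hεrp⟩ : ∃ ε : ℝ, 0 < ε ∧ ε ≤ r ∧ ENNReal.ofReal ε ≤ rp := by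
    rcases eq_or_ne rp ⊤ with h | h
    · exact ⟨r, hr, le_refl r, by simp [h]⟩
    · refine ⟨min r rp.toReal, ?_, min_le_left _ _, ?_⟩
      · have : 0 < rp.toReal := ENNReal.toReal_pos (ne_of_gt hrp.r_pos) h
        exact lt_min hr this
      · calc ENNReal.ofReal (min r rp.toReal) ≤ ENNReal.ofReal rp.toReal :=
              ENNReal.ofReal_le_ofReal (min_le_right _ _)
          _ = rp := ENNReal.ofReal_toReal h
  refine ⟨ε, hε0, ?_⟩
  intro x hx
  have hsub : Metric.ball (0 : EuclideanSpace ℝ (Fin ℓ)) ε ⊆ Metric.ball 0 r :=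
    Metric.ball_subset_ball hεr
  have hsub2 : Metric.ball (0 : EuclideanSpace ℝ (Fin ℓ)) ε ⊆ Metric.eball 0 rp := by
    intro z hz
    rw [Metric.mem_eball]
    have h1 : edist z 0 < ENNReal.ofReal ε := by
      rw [edist_dist]
      exact (ENNReal.ofReal_lt_ofReal_iff hε0).2 (Metric.mem_ball.1 hz)
    exact lt_of_lt_of_le h1 hεrp
  have hdiff : ∀ z ∈ Metric.ball (0 : EuclideanSpace ℝ (Fin ℓ)) ε, DifferentiableAt ℝ q z :=
    fun z hz => (hq z (hsub hz)).differentiableAt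
  have hbound : ∀ z ∈ Metric.ball (0 : EuclideanSpace ℝ (Fin ℓ)) ε, ‖fderiv ℝ q z‖ ≤ 0 := by
    intro z hz
    rw [hzero z (hsub2 hz)]; simp
  have hmv := (convex_ball (0 : EuclideanSpace ℝ (Fin ℓ)) ε).norm_image_sub_le_of_norm_fderiv_le
    hdiff hbound (Metric.mem_ball_self hε0) hx
  have : ‖q x - q 0‖ ≤ 0 := by simpa using hmv
  have := norm_le_zero_iff.1 this
  linarith [sub_eq_zero.1 this]
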